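/- arXiv:1305.0334 — 2 statements merged into one kernel-verified Lean document; each statement's English description precedes it below -/
import Mathlib

section
/- Let {f_k} be a frame for a separable Hilbert space H with frame operator S defined by S(f) = Σ_k ⟨f, f_k⟩ f_k. Then S is a positive, bounded, invertible linear operator from H onto H, and every f ∈ H satisfies f = Σ_k ⟨S⁻¹f, f_k⟩ f_k. -/
open Filter Topology
open scoped RealInnerProductSpace

/-- Let `{f k}` be a frame for a separable Hilbert space `H` with bounds
`A, B > 0`, and let `S` be the associated frame operator,
`S x = Σ_k ⟪x, f k⟫ • f k`.  Then `S` is positive and invertible, and every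
`x ∈ H` satisfies the reconstruction formula `x = Σ_k ⟪S⁻¹ x, f k⟫ • f k`. -/
theorem frame_operator_positive_invertible_and_reconstruction
    {H : Type*} [NormedAddCommGroup H] [InnerProductSpace ℝ H] [CompleteSpace H]
    [TopologicalSpace.SeparableSpace H]
    (f : ℕ → H) (A B : ℝ) (hA : 0 < A) (hB : 0 < B)
    (hframe : ∀ x : H,
      A * ‖x‖ ^ 2 ≤ ∑' k, ⟪x, f k⟫ ^ 2 ∧ ∑' k, ⟪x, f k⟫ ^ 2 ≤ B * ‖x‖ ^ 2)
    (S : H →L[ℝ] H)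
    (hS : ∀ x : H, HasSum (fun k => ⟪x, f k⟫ • f k) (S x)) :
    (∀ x : H, 0 ≤ ⟪S x, x⟫) ∧
      ∃ Sinv : H →L[ℝ] H, (∀ x, Sinv (S x) = x) ∧ (∀ x, S (Sinv x) = x) ∧
        ∀ x : H, HasSum (fun k => ⟪Sinv x, f k⟫ • f k) x := by
  -- key identity: ⟪S x, x⟫ = ∑' k, ⟪x, f k⟫ ^ 2
  have hkey : ∀ x : H, ⟪S x, x⟫ = ∑' k, ⟪x, f k⟫ ^ 2 := by
    intro x
    have h1 : HasSum (fun k => ⟪x, f k⟫ ^ 2) ⟪x, S x⟫ := by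
      have := (hS x).mapL (innerSL ℝ x)
      simpa [real_inner_smul_right, sq] using this
    rw [real_inner_comm]
    exact h1.tsum_eq.symm ▸ rfl
  -- coercivity
  have hcoer : ∀ x : H, A * ‖x‖ ^ 2 ≤ ⟪S x, x⟫ := fun x => by
    rw [hkey]; exact (hframe x).1
  have hpos : ∀ x : H, 0 ≤ ⟪S x, x⟫ := fun x =>
    le_trans (by positivity) (hcoer x)
  -- lower norm bound
  have hbelow : ∀ x : H, A * ‖x‖ ≤ ‖S x‖ := by
    intro x
    by_cases h : 0 < ‖x‖
    · refine (mul_le_mul_iff_of_pos_right h).mp ?_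
      calc A * ‖x‖ * ‖x‖ = A * ‖x‖ ^ 2 := by ring
        _ ≤ ⟪S x, x⟫ := hcoer x
        _ ≤ ‖S x‖ * ‖x‖ := real_inner_le_norm (S x) x
    · have : x = 0 := by simpa using h
      simp [this]
  have hanti : AntilipschitzWith (A⁻¹).toNNReal S := by
    refine ContinuousLinearMap.antilipschitz_of_bound S ?_
    intro x
    rw [Real.coe_toNNReal', max_eq_left_of_lt (inv_pos.mpr hA)]
    rw [← inv_mul_le_iff₀ (inv_pos.mpr hA), inv_inv]
    exact hbelow x
  have hker : S.ker = ⊥ := by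
    exact LinearMap.ker_eq_bot.mpr hanti.injective
  have hclosed : IsClosed (S.range : Set H) :=
    hanti.isClosed_range S.uniformContinuous
  have hrange : S.range = ⊤ := by
    haveI := hclosed.completeSpace_coe
    rw [← S.range.orthogonal_orthogonal, Submodule.eq_top_iff']
    intro v w hw
    obtain rfl : w = 0 := by
      have h0 : ⟪S w, w⟫ = 0 := hw _ ⟨w, rfl⟩
      have := hcoer w
      rw [h0] at this
      have hn : ‖w‖ ^ 2 ≤ 0 := by
        nlinarith
      have : ‖w‖ = 0 := by nlinarith [sq_nonneg ‖w‖, norm_nonneg w]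
      simpa using this
    exact inner_zero_left _
  set e : H ≃L[ℝ] H := ContinuousLinearEquiv.ofBijective S hker hrange with he
  refine ⟨hpos, e.symm.toContinuousLinearMap, ?_, ?_, ?_⟩
  · intro x
    exact e.symm_apply_apply x
  · intro x
    exact e.apply_symm_apply x
  · intro x
    have := hS (e.symm x)
    have hx : S (e.symm x) = x := e.apply_symm_apply x
    rw [hx] at this
    exact this
end

section
/- Let ({f_k}, {f_k*}) be a reconstruction system for a Banach space X, U = {(γ_i) : Σ_i γ_i f_i converges} with norm ‖(γ_i)‖_U = sup_k ‖Σ_{i=1}^k γ_i f_i‖. Then the map Γ : X → U, Γ(f) = (f_k*(f))_k, is a bounded linear isomorphism of X onto its range, and the map Θ : U → X, Θ((γ_i)) = Σ_i γ_i f_i, is a bounded linear surjection with Θ ∘ Γ = id_X. -/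
open Filter Topology

/-- A reconstruction system for `X`. -/
def ReconSystem {X : Type*} [NormedAddCommGroup X] [NormedSpace ℝ X]
    (f : ℕ → X) (F : ℕ → X →L[ℝ] ℝ) : Prop :=
  ∀ x : X, Tendsto (fun n => ∑ k ∈ Finset.range n, F k x • f k) atTop (𝓝 x)

/-- The set `U` of scalar sequences `γ` for which `Σ_i γ i • f i` converges. -/
def USet {X : Type*} [NormedAddCommGroup X] [NormedSpace ℝ X] (f : ℕ → X) :
    Set (ℕ → ℝ) :=
  {γ | ∃ x : X, Tendsto (fun n => ∑ i ∈ Finset.range n, γ i • f i) atTop (𝓝 x)}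

/-- The norm `‖γ‖_U = sup_k ‖Σ_{i ≤ k} γ i • f i‖` on `U`. -/
noncomputable def UNorm {X : Type*} [NormedAddCommGroup X] [NormedSpace ℝ X]
    (f : ℕ → X) (γ : ℕ → ℝ) : ℝ :=
  ⨆ k : ℕ, ‖∑ i ∈ Finset.range (k + 1), γ i • f i‖

lemma norm_le_UNorm_aux {X : Type*} [NormedAddCommGroup X] [NormedSpace ℝ X]
    (f : ℕ → X) (γ : ℕ → ℝ) (x : X)
    (hx : Tendsto (fun n => ∑ i ∈ Finset.range n, γ i • f i) atTop (𝓝 x)) :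
    ‖x‖ ≤ ⨆ k : ℕ, ‖∑ i ∈ Finset.range (k + 1), γ i • f i‖ := by
  have h1 : Tendsto (fun k : ℕ => ‖∑ i ∈ Finset.range (k + 1), γ i • f i‖)
      atTop (𝓝 ‖x‖) := ((hx.comp (tendsto_add_atTop_nat 1)).norm)
  have hbdd : BddAbove (Set.range fun k : ℕ =>
      ‖∑ i ∈ Finset.range (k + 1), γ i • f i‖) := h1.bddAbove_range
  exact le_of_tendsto h1 (Eventually.of_forall fun k => le_ciSup hbdd k)

/-- For a reconstruction system `(f, F)`, the coefficient map
`Γ x = (F k x)ₖ` maps `X` into `U`, is linear, bounded and bounded below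
(hence an isomorphism onto its range), while the summation map
`Θ : U → X` is bounded linear and onto, with `Θ ∘ Γ = id`. -/
theorem coefficient_map_isomorphism_and_summation_surjection
    {X : Type*} [NormedAddCommGroup X] [NormedSpace ℝ X] [CompleteSpace X]
    (f : ℕ → X) (F : ℕ → X →L[ℝ] ℝ) (hrec : ReconSystem f F) :
    (∀ x : X, (fun k => F k x) ∈ USet f) ∧
    (∀ x y : X, (fun k => F k (x + y)) = (fun k => F k x) + fun k => F k y) ∧
    (∀ (c : ℝ) (x : X), (fun k => F k (c • x)) = c • fun k => F k x) ∧
    (∃ C > (0 : ℝ), ∀ x : X, UNorm f (fun k => F k x) ≤ C * ‖x‖) ∧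
    (∃ c > (0 : ℝ), ∀ x : X, c * ‖x‖ ≤ UNorm f (fun k => F k x)) ∧
    (∀ γ ∈ USet f, ∀ x : X,
      Tendsto (fun n => ∑ i ∈ Finset.range n, γ i • f i) atTop (𝓝 x) →
        ‖x‖ ≤ UNorm f γ) ∧
    (∀ x : X,
      Tendsto (fun n => ∑ i ∈ Finset.range n, F i x • f i) atTop (𝓝 x)) := by
  refine ⟨fun x => ⟨x, hrec x⟩,
    fun x y => by funext k; simp,
    fun c x => by funext k; simp,
    ?_, ?_,
    fun γ _ x hx => norm_le_UNorm_aux f γ x hx,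
    hrec⟩
  · -- boundedness via Banach–Steinhaus
    set S : ℕ → X →L[ℝ] X := fun n =>
      ∑ k ∈ Finset.range (n + 1), (F k).smulRight (f k) with hS
    have hSx : ∀ n x, S n x = ∑ k ∈ Finset.range (n + 1), F k x • f k := by
      intro n x
      simp [hS, ContinuousLinearMap.sum_apply]
    have hpt : ∀ x : X, ∃ C, ∀ n, ‖S n x‖ ≤ C := by
      intro x
      have h1 : Tendsto (fun n : ℕ => ‖S n x‖) atTop (𝓝 ‖x‖) := by
        simp only [hSx]
        exact ((hrec x).comp (tendsto_add_atTop_nat 1)).norm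
      obtain ⟨C, hC⟩ := h1.bddAbove_range
      exact ⟨C, fun n => hC ⟨n, rfl⟩⟩
    obtain ⟨C', hC'⟩ := banach_steinhaus hpt
    refine ⟨max C' 1, lt_of_lt_of_le one_pos (le_max_right _ _), fun x => ?_⟩
    apply ciSup_le
    intro k
    calc ‖∑ i ∈ Finset.range (k + 1), F i x • f i‖ = ‖S k x‖ := by rw [hSx]
      _ ≤ ‖S k‖ * ‖x‖ := (S k).le_opNorm x
      _ ≤ max C' 1 * ‖x‖ := by
          gcongr
          exact le_trans (hC' k) (le_max_left _ _)
  · exact ⟨1, one_pos, fun x => by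
      rw [one_mul]; exact norm_le_UNorm_aux f (fun k => F k x) x (hrec x)⟩
end
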